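/- arXiv:1711.08857 — 3 statements merged into one kernel-verified Lean document; each statement's English description precedes it below -/
import Mathlib

section
/- For every integer n ≥ 1, the set of parameters p at which stopping is optimal in state (n,1) is a left interval with right endpoint p_n: for every p ∈ (0,1), U_n(p) ≥ W_n(p) if and only if p ≤ p_n. -/
open Finset

/-- Probability weight of a single path of length `N`. -/
noncomputable def pathProb (p : ℝ) (N : ℕ) (x : Fin N → Bool) : ℝ :=
  p ^ (Finset.univ.filter (fun i => x i = true)).card *
    (1 - p) ^ (N - (Finset.univ.filter (fun i => x i = true)).card)

open Classical in
/-- Probability of an event `E` for the `N`-step Bernoulli walk. -/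
noncomputable def walkProb (p : ℝ) (N : ℕ) (E : Set (Fin N → Bool)) : ℝ :=
  ∑ x : Fin N → Bool, if x ∈ E then pathProb p N x else 0

/-- Partial sum `S_j` of the walk given by the path `x`. -/
def walkS (N : ℕ) (x : Fin N → Bool) (j : ℕ) : ℤ :=
  ∑ i ∈ Finset.univ.filter (fun i : Fin N => (i : ℕ) < j), (if x i then (1 : ℤ) else -1)

/-- Running maximum `M_N = max_{0 ≤ j ≤ N} S_j`. -/
def walkM (N : ℕ) (x : Fin N → Bool) : ℤ :=
  (Finset.range (N + 1)).sup' Finset.nonempty_range_add_one (fun j => walkS N x j)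

/-- `U_n(p) = P(M_n ≤ 1)`. -/
noncomputable def U (n : ℕ) (p : ℝ) : ℝ :=
  walkProb p n {x | walkM n x ≤ 1}

/-- Value function `π_p(n, j)`, defined by backward induction. -/
noncomputable def piVal (p : ℝ) : ℕ → ℕ → ℝ
  | 0, 0 => 1
  | 0, 1 => 1
  | 0, _ + 2 => 0
  | n + 1, 0 => p * piVal p n 0 + (1 - p) * piVal p n 1
  | n + 1, 1 => max (U (n + 1) p) (p * piVal p n 0 + (1 - p) * piVal p n 2)
  | n + 1, j + 2 => p * piVal p n (j + 1) + (1 - p) * piVal p n (j + 3)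

/-- `W_n(p) = p·π_p(n-1,0) + q·π_p(n-1,2)` (for `n ≥ 1`). -/
noncomputable def W (n : ℕ) (p : ℝ) : ℝ :=
  p * piVal p (n - 1) 0 + (1 - p) * piVal p (n - 1) 2

/-- Critical value `p_n = sup {p ∈ (0,1) : U_n(p) ≥ W_n(p)}`. -/
noncomputable def pc (n : ℕ) : ℝ :=
  sSup {p : ℝ | p ∈ Set.Ioo (0 : ℝ) 1 ∧ U n p ≥ W n p}

noncomputable def RZ : ℕ → ℤ → ℝ → ℝ
  | 0, k, _ => if 0 ≤ k then 1 else 0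
  | n+1, k, p => if 0 ≤ k then p * RZ n (k-1) p + (1-p) * RZ n (k+1) p else 0

lemma RZ_succ (n : ℕ) (k : ℤ) (p : ℝ) :
    RZ (n+1) k p = if 0 ≤ k then p * RZ n (k-1) p + (1-p) * RZ n (k+1) p else 0 := rfl

lemma walkS_zero (N : ℕ) (x : Fin N → Bool) : walkS N x 0 = 0 := by
  unfold walkS
  rw [Finset.filter_false_of_mem, Finset.sum_empty]
  intro i _; omega

lemma walkS_eq_sum (N : ℕ) (x : Fin N → Bool) (j : ℕ) :
    walkS N x j = ∑ i : Fin N, if (i : ℕ) < j then (if x i then (1 : ℤ) else -1) else 0 := by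
  unfold walkS
  rw [Finset.sum_filter]

lemma walkS_succ (n : ℕ) (x : Fin (n+1) → Bool) (j : ℕ) :
    walkS (n+1) x (j+1) = (if x 0 then (1:ℤ) else -1) + walkS n (x ∘ Fin.succ) j := by
  rw [walkS_eq_sum, walkS_eq_sum, Fin.sum_univ_succ]
  simp only [Fin.val_zero, Nat.zero_lt_succ, if_true, Fin.val_succ, Function.comp_apply]
  congr 1
  apply Finset.sum_congr rfl
  intro i _
  simp [Nat.succ_lt_succ_iff]

lemma walkM_nonneg (N : ℕ) (x : Fin N → Bool) : 0 ≤ walkM N x := by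
  have h0 : (0:ℕ) ∈ Finset.range (N+1) := by simp
  have := Finset.le_sup' (fun j => walkS N x j) h0
  rw [walkS_zero] at this
  exact this

lemma walkM_le_iff (N : ℕ) (x : Fin N → Bool) (k : ℤ) :
    walkM N x ≤ k ↔ ∀ j ∈ Finset.range (N+1), walkS N x j ≤ k := by
  exact Finset.sup'_le_iff _ _

lemma walkM_succ_le_iff (n : ℕ) (x : Fin (n+1) → Bool) (k : ℤ) (hk : 0 ≤ k) :
    walkM (n+1) x ≤ k ↔ walkM n (x ∘ Fin.succ) ≤ k - (if x 0 then (1:ℤ) else -1) := by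
  rw [walkM_le_iff, walkM_le_iff]
  constructor
  · intro h j hj
    have hj' : j + 1 ∈ Finset.range (n+1+1) := by
      simp only [Finset.mem_range] at hj ⊢; omega
    have := h (j+1) hj'
    rw [walkS_succ] at this
    omega
  · intro h j hj
    cases j with
    | zero => rw [walkS_zero]; exact hk
    | succ j =>
      rw [walkS_succ]
      have hj' : j ∈ Finset.range (n+1) := by
        simp only [Finset.mem_range] at hj ⊢; omega
      have := h j hj'
      omega

lemma card_filter_cons (n : ℕ) (b : Bool) (y : Fin n → Bool) :
    (Finset.univ.filter (fun i => (Fin.cons b y : Fin (n+1) → Bool) i = true)).card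
      = (if b then 1 else 0) + (Finset.univ.filter (fun i => y i = true)).card := by
  rw [Finset.card_filter, Finset.card_filter, Fin.sum_univ_succ]
  simp only [Fin.cons_zero, Fin.cons_succ]

lemma pathProb_cons (p : ℝ) (n : ℕ) (b : Bool) (y : Fin n → Bool) :
    pathProb p (n+1) (Fin.cons b y) = (if b then p else (1-p)) * pathProb p n y := by
  have hle : (Finset.univ.filter (fun i => y i = true)).card ≤ n := by
    calc _ ≤ (Finset.univ : Finset (Fin n)).card := Finset.card_filter_le _ _
    _ = n := by simp
  unfold pathProb
  rw [card_filter_cons]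
  cases b
  · simp only [Bool.false_eq_true, if_false, zero_add]
    have h2 : n + 1 - (Finset.univ.filter (fun i => y i = true)).card
        = (n - (Finset.univ.filter (fun i => y i = true)).card) + 1 := by omega
    rw [h2, pow_succ]
    ring
  · simp only [if_true]
    have h2 : n + 1 - (1 + (Finset.univ.filter (fun i => y i = true)).card)
        = n - (Finset.univ.filter (fun i => y i = true)).card := by omega
    rw [h2, add_comm 1 _, pow_succ]
    ring

lemma walkM_zero_eq (x : Fin 0 → Bool) : walkM 0 x = 0 := by
  have h1 : walkM 0 x ≤ 0 := by
    rw [walkM_le_iff]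
    intro j hj
    have hj0 : j = 0 := by simp only [Finset.mem_range] at hj; omega
    subst hj0
    rw [walkS_zero]
  exact le_antisymm h1 (walkM_nonneg 0 x)

lemma cons_tail_eq (n : ℕ) (b : Bool) (y : Fin n → Bool) :
    (Fin.cons b y : Fin (n+1) → Bool) ∘ Fin.succ = y := by
  funext i
  simp [Fin.cons_succ]

lemma walkProb_M_eq_RZ (n : ℕ) (k : ℤ) (p : ℝ) :
    walkProb p n {x | walkM n x ≤ k} = RZ n k p := by
  induction n generalizing k with
  | zero =>
    unfold walkProb RZ
    rw [Fintype.sum_unique]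
    simp only [Set.mem_setOf_eq, walkM_zero_eq]
    by_cases hk : 0 ≤ k
    · rw [if_pos hk, if_pos hk]
      unfold pathProb; simp
    · rw [if_neg hk, if_neg hk]
  | succ n ih =>
    by_cases hk : 0 ≤ k
    · unfold walkProb
      refine Eq.trans (Fintype.sum_equiv ((Fin.consEquiv (fun _ : Fin (n+1) => Bool)).symm)
        _ (fun by_ : Bool × (Fin n → Bool) => (if by_.1 then p else (1-p)) *
            (if walkM n by_.2 ≤ k - (if by_.1 then (1:ℤ) else -1)
              then pathProb p n by_.2 else 0)) ?_) ?_
      · intro x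
        have hx : x = Fin.cons (x 0) (x ∘ Fin.succ) := by
          funext i
          refine Fin.cases ?_ ?_ i
          · rfl
          · intro j; simp [Fin.cons_succ]
        have he : ((Fin.consEquiv (fun _ : Fin (n+1) => Bool)).symm x)
            = (x 0, x ∘ Fin.succ) := by
          apply (Fin.consEquiv (fun _ : Fin (n+1) => Bool)).injective
          simp only [Equiv.apply_symm_apply]
          exact hx
        rw [he]
        simp only [Set.mem_setOf_eq]
        have hM := walkM_succ_le_iff n x k hk
        by_cases hMx : walkM (n+1) x ≤ k
        · rw [if_pos hMx, if_pos (hM.mp hMx)]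
          conv_lhs => rw [hx]
          rw [pathProb_cons]
        · rw [if_neg hMx, if_neg (fun h => hMx (hM.mpr h)), mul_zero]
      · rw [Fintype.sum_prod_type, Fintype.sum_bool]
        simp only [if_true, Bool.false_eq_true, if_false]
        rw [← Finset.mul_sum, ← Finset.mul_sum]
        have e1 : (∑ y : Fin n → Bool, if walkM n y ≤ k - 1 then pathProb p n y else 0)
            = RZ n (k-1) p := by
          rw [← ih (k-1)]
          unfold walkProb
          simp only [Set.mem_setOf_eq]
        have e2 : (∑ y : Fin n → Bool, if walkM n y ≤ k - (-1) then pathProb p n y else 0)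
            = RZ n (k+1) p := by
          rw [← ih (k+1)]
          unfold walkProb
          simp only [Set.mem_setOf_eq]
          exact Finset.sum_congr rfl (fun y _ => by
            have hkk : k - (-1) = k + 1 := by ring
            rw [hkk])
        rw [e1, e2, RZ_succ, if_pos hk]
    · have hempty : ∀ x : Fin (n+1) → Bool, ¬ (walkM (n+1) x ≤ k) := by
        intro x hx
        have := walkM_nonneg (n+1) x
        omega
      unfold walkProb
      rw [Finset.sum_eq_zero]
      · unfold RZ; rw [if_neg hk]
      · intro x _
        rw [if_neg (by exact hempty x)]

lemma RZ_zero_eq (k : ℤ) (p : ℝ) : RZ 0 k p = if 0 ≤ k then 1 else 0 := rfl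

lemma RZ_nonneg (n : ℕ) (k : ℤ) (p : ℝ) (hp0 : 0 ≤ p) (hp1 : p ≤ 1) : 0 ≤ RZ n k p := by
  induction n generalizing k with
  | zero => rw [RZ_zero_eq]; split <;> norm_num
  | succ n ih =>
    rw [RZ_succ]
    split
    · have := ih (k-1); have := ih (k+1); nlinarith
    · exact le_refl 0

lemma RZ_pos (n : ℕ) (k : ℤ) (p : ℝ) (hk : 0 ≤ k) (hp0 : 0 < p) (hp1 : p < 1) :
    0 < RZ n k p := by
  induction n generalizing k with
  | zero => rw [RZ_zero_eq, if_pos hk]; norm_num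
  | succ n ih =>
    rw [RZ_succ, if_pos hk]
    have h1 : 0 < (1-p) * RZ n (k+1) p :=
      mul_pos (by linarith) (ih (k+1) (by omega))
    have h2 : 0 ≤ p * RZ n (k-1) p :=
      mul_nonneg hp0.le (RZ_nonneg n (k-1) p hp0.le hp1.le)
    linarith

lemma RZ_neg (n : ℕ) (k : ℤ) (p : ℝ) (hk : k < 0) : RZ n k p = 0 := by
  cases n with
  | zero => rw [RZ_zero_eq, if_neg (by omega)]
  | succ n => rw [RZ_succ, if_neg (by omega)]

lemma U_eq_RZ (n : ℕ) (p : ℝ) : U n p = RZ n 1 p := walkProb_M_eq_RZ n 1 p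

lemma pathProb_nonneg (p : ℝ) (N : ℕ) (x : Fin N → Bool) (hp0 : 0 ≤ p) (hp1 : p ≤ 1) :
    0 ≤ pathProb p N x := by
  unfold pathProb
  have : (0:ℝ) ≤ 1 - p := by linarith
  positivity

lemma walkProb_nonneg (p : ℝ) (N : ℕ) (E : Set (Fin N → Bool)) (hp0 : 0 ≤ p) (hp1 : p ≤ 1) :
    0 ≤ walkProb p N E := by
  unfold walkProb
  apply Finset.sum_nonneg
  intro x _
  split
  · exact pathProb_nonneg p N x hp0 hp1
  · exact le_refl 0

lemma piVal_nonneg (p : ℝ) (hp0 : 0 ≤ p) (hp1 : p ≤ 1) : ∀ n j, 0 ≤ piVal p n j := by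
  intro n
  induction n with
  | zero =>
    intro j
    match j with
    | 0 => exact zero_le_one
    | 1 => exact zero_le_one
    | (j+2) => exact le_refl 0
  | succ n ih =>
    intro j
    match j with
    | 0 =>
      show (0:ℝ) ≤ p * piVal p n 0 + (1 - p) * piVal p n 1
      have := ih 0; have := ih 1; nlinarith
    | 1 =>
      show (0:ℝ) ≤ max (U (n + 1) p) (p * piVal p n 0 + (1 - p) * piVal p n 2)
      have h := walkProb_nonneg p (n+1) {x | walkM (n+1) x ≤ 1} hp0 hp1
      exact le_max_of_le_left h
    | (j+2) =>
      show (0:ℝ) ≤ p * piVal p n (j+1) + (1 - p) * piVal p n (j+3)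
      have := ih (j+1); have := ih (j+3); nlinarith

------------------------------------------------------------------
-- ratio quantities
------------------------------------------------------------------

noncomputable def aA (n k : ℕ) (p : ℝ) : ℝ := (p * RZ n k p) / ((1-p) * RZ n (k+2) p)
noncomputable def cC (n k : ℕ) (p : ℝ) : ℝ := RZ n k p / RZ n (k+1) p
noncomputable def dD (n k : ℕ) (p : ℝ) : ℝ := (p * RZ n k p) / ((1-p) * RZ n (k+1) p)
noncomputable def rr (n j : ℕ) (p : ℝ) : ℝ := piVal p n j / RZ n j p

lemma aA_nonneg (n k : ℕ) (p : ℝ) (hp0 : 0 < p) (hp1 : p < 1) : 0 ≤ aA n k p := by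
  unfold aA
  have h1 := RZ_nonneg n k p hp0.le hp1.le
  have h2 := RZ_pos n (k+2) p (by positivity) hp0 hp1
  have h3 : 0 < 1 - p := by linarith
  positivity

lemma aA_pos (n k : ℕ) (p : ℝ) (hp0 : 0 < p) (hp1 : p < 1) : 0 < aA n k p := by
  unfold aA
  have h1 := RZ_pos n k p (by positivity) hp0 hp1
  have h2 := RZ_pos n (k+2) p (by positivity) hp0 hp1
  have h3 : 0 < 1 - p := by linarith
  positivity

lemma cC_pos (n k : ℕ) (p : ℝ) (hp0 : 0 < p) (hp1 : p < 1) : 0 < cC n k p := by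
  unfold cC
  have h1 := RZ_pos n k p (by positivity) hp0 hp1
  have h2 := RZ_pos n (k+1) p (by positivity) hp0 hp1
  positivity

lemma dD_pos (n k : ℕ) (p : ℝ) (hp0 : 0 < p) (hp1 : p < 1) : 0 < dD n k p := by
  unfold dD
  have h1 := RZ_pos n k p (by positivity) hp0 hp1
  have h2 := RZ_pos n (k+1) p (by positivity) hp0 hp1
  have h3 : 0 < 1 - p := by linarith
  positivity

lemma rr_nonneg (n j : ℕ) (p : ℝ) (hp0 : 0 < p) (hp1 : p < 1) : 0 ≤ rr n j p := by
  unfold rr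
  have h1 := piVal_nonneg p hp0.le hp1.le n j
  have h2 := RZ_pos n j p (by positivity) hp0 hp1
  positivity

------------------------------------------------------------------
-- step lemmas for RZ
------------------------------------------------------------------

lemma RZ_step0 (n : ℕ) (p : ℝ) : RZ (n+1) (0:ℤ) p = (1-p) * RZ n 1 p := by
  rw [RZ_succ, if_pos le_rfl, RZ_neg n (0-1) p (by omega)]
  norm_num

lemma RZ_stepS (n : ℕ) (a : ℤ) (ha : 0 ≤ a) (p : ℝ) :
    RZ (n+1) (a+1) p = p * RZ n a p + (1-p) * RZ n (a+2) p := by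
  rw [RZ_succ, if_pos (by omega), show a+1-1 = a from by ring, show a+1+1 = a+2 from by ring]

------------------------------------------------------------------
-- identities
------------------------------------------------------------------

section identities
variable {p : ℝ} (hp0 : 0 < p) (hp1 : p < 1)
include hp0 hp1

lemma id_a0 (n : ℕ) : aA (n+1) 0 p = aA n 1 p / (1 + aA n 1 p) := by
  unfold aA
  push_cast
  have h1 := RZ_pos n 1 p (by norm_num) hp0 hp1
  have h3 := RZ_pos n 3 p (by norm_num) hp0 hp1
  have hq : (0:ℝ) < 1 - p := by linarith
  rw [RZ_step0, show (2:ℤ) = 1+1 from by norm_num, RZ_stepS n 1 (by norm_num),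
      show (1:ℤ)+2 = 3 from by norm_num]
  have hd : 0 < p * RZ n 1 p + (1-p) * RZ n 3 p := by nlinarith
  have n1 := h1.ne'
  have n3 := h3.ne'
  have nq := hq.ne'
  have nd := hd.ne'
  field_simp
  ring

lemma id_aS (n k : ℕ) :
    aA (n+1) (k+1) p = (1 + aA n k p) * (aA n (k+2) p / (1 + aA n (k+2) p)) := by
  unfold aA
  push_cast
  have h0 := RZ_pos n (k:ℤ) p (by positivity) hp0 hp1
  have h2 := RZ_pos n ((k:ℤ)+2) p (by positivity) hp0 hp1
  have h4 := RZ_pos n ((k:ℤ)+4) p (by positivity) hp0 hp1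
  have hq : (0:ℝ) < 1 - p := by linarith
  rw [show (k:ℤ)+1+2 = ((k:ℤ)+2)+1 from by ring, RZ_stepS n (k:ℤ) (by positivity),
      RZ_stepS n ((k:ℤ)+2) (by positivity), show (k:ℤ)+2+2 = (k:ℤ)+4 from by ring]
  have hA : 0 < p * RZ n (k:ℤ) p + (1-p) * RZ n ((k:ℤ)+2) p := by nlinarith
  have hB : 0 < p * RZ n ((k:ℤ)+2) p + (1-p) * RZ n ((k:ℤ)+4) p := by nlinarith
  have hplus : 0 < 1 + p * RZ n ((k:ℤ)+2) p / ((1-p) * RZ n ((k:ℤ)+4) p) := by positivity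
  have n0 := h0.ne'; have n2 := h2.ne'; have n4 := h4.ne'
  have nq := hq.ne'; have nA := hA.ne'; have nB := hB.ne'; have nplus := hplus.ne'
  field_simp
  ring

lemma id_cS (n k : ℕ) :
    cC (n+1) (k+1) p = (aA n (k+1) p * cC n k p + cC n (k+2) p) / (aA n (k+1) p + 1) := by
  unfold cC aA
  push_cast
  have h0 := RZ_pos n (k:ℤ) p (by positivity) hp0 hp1
  have h1 := RZ_pos n ((k:ℤ)+1) p (by positivity) hp0 hp1
  have h2 := RZ_pos n ((k:ℤ)+2) p (by positivity) hp0 hp1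
  have h3 := RZ_pos n ((k:ℤ)+3) p (by positivity) hp0 hp1
  have hq : (0:ℝ) < 1 - p := by linarith
  rw [show (k:ℤ)+1+1 = ((k:ℤ)+1)+1 from by ring, RZ_stepS n (k:ℤ) (by positivity),
      RZ_stepS n ((k:ℤ)+1) (by positivity), show (k:ℤ)+1+2 = (k:ℤ)+3 from by ring]
  rw [show (k:ℤ)+2+1 = (k:ℤ)+3 from by ring]
  have hB : 0 < p * RZ n ((k:ℤ)+1) p + (1-p) * RZ n ((k:ℤ)+3) p := by nlinarith
  have hA : 0 < p * RZ n ((k:ℤ)+1) p / ((1-p) * RZ n ((k:ℤ)+3) p) + 1 := by positivity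
  have n0 := h0.ne'; have n1 := h1.ne'; have n2 := h2.ne'; have n3 := h3.ne'
  have nq := hq.ne'; have nA := hA.ne'; have nB := hB.ne'
  set r0 := RZ n (k:ℤ) p
  set r1 := RZ n ((k:ℤ)+1) p
  set r2 := RZ n ((k:ℤ)+2) p
  set r3 := RZ n ((k:ℤ)+3) p
  field_simp

lemma id_c0 (n : ℕ) : cC (n+1) 0 p = 1 / (dD n 0 p + 1 / cC n 1 p) := by
  unfold cC dD
  push_cast
  have h0 := RZ_pos n 0 p le_rfl hp0 hp1
  have h1 := RZ_pos n 1 p (by norm_num) hp0 hp1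
  have h2 := RZ_pos n 2 p (by norm_num) hp0 hp1
  have hq : (0:ℝ) < 1 - p := by linarith
  rw [RZ_step0, show (1:ℤ) = 0+1 from by norm_num, RZ_stepS n 0 le_rfl,
      show (0:ℤ)+2 = 2 from by norm_num]
  have hB : 0 < p * RZ n 0 p + (1-p) * RZ n 2 p := by nlinarith
  have hA : 0 < p * RZ n 0 p / ((1-p) * RZ n 1 p) + 1 / (RZ n 1 p / RZ n 2 p) := by positivity
  have n0 := h0.ne'; have n1 := h1.ne'; have n2 := h2.ne'
  have nq := hq.ne'; have nA := hA.ne'; have nB := hB.ne'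
  field_simp

lemma id_d (n k : ℕ) : dD n k p = aA n k p / cC n (k+1) p := by
  unfold dD aA cC
  push_cast
  have h1 := RZ_pos n ((k:ℤ)+1) p (by positivity) hp0 hp1
  have h2 := RZ_pos n ((k:ℤ)+2) p (by positivity) hp0 hp1
  have hq : (0:ℝ) < 1 - p := by linarith
  have n1 := h1.ne'; have n2 := h2.ne'; have nq := hq.ne'
  field_simp
  ring

end identities

------------------------------------------------------------------
-- piVal equation lemmas and rr identities
------------------------------------------------------------------

lemma piVal_zero (p : ℝ) (n : ℕ) :
    piVal p (n+1) 0 = p * piVal p n 0 + (1-p) * piVal p n 1 := rfl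

lemma piVal_one (p : ℝ) (n : ℕ) :
    piVal p (n+1) 1 = max (U (n+1) p) (p * piVal p n 0 + (1-p) * piVal p n 2) := rfl

lemma piVal_two (p : ℝ) (n j : ℕ) :
    piVal p (n+1) (j+2) = p * piVal p n (j+1) + (1-p) * piVal p n (j+3) := rfl

lemma W_succ (p : ℝ) (n : ℕ) :
    W (n+1) p = p * piVal p n 0 + (1-p) * piVal p n 2 := by
  unfold W
  norm_num

section rident
variable {p : ℝ} (hp0 : 0 < p) (hp1 : p < 1)
include hp0 hp1

lemma id_r0 (n : ℕ) : rr (n+1) 0 p = dD n 0 p * rr n 0 p + rr n 1 p := by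
  unfold rr dD
  rw [piVal_zero]
  push_cast
  rw [RZ_step0]
  have h0 := RZ_pos n 0 p le_rfl hp0 hp1
  have h1 := RZ_pos n 1 p (by norm_num) hp0 hp1
  have hq : (0:ℝ) < 1 - p := by linarith
  have n0 := h0.ne'; have n1 := h1.ne'; have nq := hq.ne'
  field_simp

lemma id_WU (n : ℕ) :
    (p * piVal p n 0 + (1-p) * piVal p n 2) / RZ (n+1) 1 p
      = (aA n 0 p * rr n 0 p + rr n 2 p) / (aA n 0 p + 1) := by
  unfold rr aA
  push_cast
  rw [show (1:ℤ) = 0+1 from by norm_num, RZ_stepS n 0 le_rfl,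
      show (0:ℤ)+2 = 2 from by norm_num]
  have h0 := RZ_pos n 0 p le_rfl hp0 hp1
  have h2 := RZ_pos n 2 p (by norm_num) hp0 hp1
  have hq : (0:ℝ) < 1 - p := by linarith
  have hB : 0 < p * RZ n 0 p + (1-p) * RZ n 2 p := by nlinarith
  have hA : 0 < p * RZ n 0 p / ((1-p) * RZ n 2 p) + 1 := by positivity
  have n0 := h0.ne'; have n2 := h2.ne'; have nq := hq.ne'
  have nA := hA.ne'; have nB := hB.ne'
  field_simp

lemma id_r1 (n : ℕ) :
    rr (n+1) 1 p = max 1 ((aA n 0 p * rr n 0 p + rr n 2 p) / (aA n 0 p + 1)) := by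
  unfold rr
  push_cast
  rw [piVal_one]
  have hpos : 0 < RZ (n+1) 1 p := RZ_pos (n+1) 1 p (by norm_num) hp0 hp1
  rw [U_eq_RZ]
  rw [← max_div_div_right hpos.le, div_self hpos.ne']
  congr 1
  exact id_WU hp0 hp1 n

lemma id_WoverU (n : ℕ) :
    W (n+1) p / U (n+1) p = (aA n 0 p * rr n 0 p + rr n 2 p) / (aA n 0 p + 1) := by
  rw [W_succ, U_eq_RZ]
  exact id_WU hp0 hp1 n

lemma id_rS (n j : ℕ) :
    rr (n+1) (j+2) p = (aA n (j+1) p * rr n (j+1) p + rr n (j+3) p) / (aA n (j+1) p + 1) := by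
  unfold rr aA
  rw [piVal_two]
  push_cast
  rw [show (j:ℤ)+2 = ((j:ℤ)+1)+1 from by ring, RZ_stepS n ((j:ℤ)+1) (by positivity),
      show (j:ℤ)+1+2 = (j:ℤ)+3 from by ring]
  have h1 := RZ_pos n ((j:ℤ)+1) p (by positivity) hp0 hp1
  have h3 := RZ_pos n ((j:ℤ)+3) p (by positivity) hp0 hp1
  have hq : (0:ℝ) < 1 - p := by linarith
  have hB : 0 < p * RZ n ((j:ℤ)+1) p + (1-p) * RZ n ((j:ℤ)+3) p := by nlinarith
  have hA : 0 < p * RZ n ((j:ℤ)+1) p / ((1-p) * RZ n ((j:ℤ)+3) p) + 1 := by positivity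
  have n1 := h1.ne'; have n3 := h3.ne'; have nq := hq.ne'
  have nA := hA.ne'; have nB := hB.ne'
  set r1 := RZ n ((j:ℤ)+1) p
  set r3 := RZ n ((j:ℤ)+3) p
  field_simp

end rident

------------------------------------------------------------------
-- average / weight inequalities
------------------------------------------------------------------

lemma div_one_add_mono {a b : ℝ} (ha : 0 ≤ a) (hab : a ≤ b) : a/(1+a) ≤ b/(1+b) := by
  rw [div_le_div_iff₀ (by linarith) (by linarith)]
  nlinarith

lemma avg_le_fst {a x y : ℝ} (ha : 0 ≤ a) (h : y ≤ x) : (a*x+y)/(a+1) ≤ x := by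
  rw [div_le_iff₀ (by linarith)]
  nlinarith

lemma snd_le_avg {a x y : ℝ} (ha : 0 ≤ a) (h : y ≤ x) : y ≤ (a*x+y)/(a+1) := by
  rw [le_div_iff₀ (by linarith)]
  nlinarith

lemma avg_le_snd {a x y : ℝ} (ha : 0 ≤ a) (h : x ≤ y) : (a*x+y)/(a+1) ≤ y := by
  rw [div_le_iff₀ (by linarith)]
  nlinarith

lemma fst_le_avg {a x y : ℝ} (ha : 0 ≤ a) (h : x ≤ y) : x ≤ (a*x+y)/(a+1) := by
  rw [le_div_iff₀ (by linarith)]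
  nlinarith

lemma avg_mono {a a' x x' y y' : ℝ} (ha : 0 ≤ a) (haa : a ≤ a') (hyx : y ≤ x)
    (hx : x ≤ x') (hy : y ≤ y') : (a*x+y)/(a+1) ≤ (a'*x'+y')/(a'+1) := by
  have ha' : 0 ≤ a' := le_trans ha haa
  have h1 : (a*x+y)/(a+1) ≤ (a'*x+y)/(a'+1) := by
    rw [div_le_div_iff₀ (by linarith) (by linarith)]
    nlinarith [mul_nonneg (sub_nonneg.2 haa) (sub_nonneg.2 hyx)]
  have h2 : (a'*x+y)/(a'+1) ≤ (a'*x'+y')/(a'+1) := by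
    rw [div_le_div_iff₀ (by linarith) (by linarith)]
    nlinarith [mul_nonneg ha' (sub_nonneg.2 hx)]
  linarith

lemma avg_anti {a a' x x' y y' : ℝ} (ha : 0 ≤ a) (haa : a ≤ a') (hxy : x ≤ y)
    (hx : x' ≤ x) (hy : y' ≤ y) : (a'*x'+y')/(a'+1) ≤ (a*x+y)/(a+1) := by
  have ha' : 0 ≤ a' := le_trans ha haa
  have h1 : (a'*x'+y')/(a'+1) ≤ (a'*x+y)/(a'+1) := by
    rw [div_le_div_iff₀ (by linarith) (by linarith)]
    nlinarith [mul_nonneg ha' (sub_nonneg.2 hx)]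
  have h2 : (a'*x+y)/(a'+1) ≤ (a*x+y)/(a+1) := by
    rw [div_le_div_iff₀ (by linarith) (by linarith)]
    nlinarith [mul_nonneg (sub_nonneg.2 haa) (sub_nonneg.2 hxy)]
  linarith

------------------------------------------------------------------
-- monotonicity predicates and the main inductions
------------------------------------------------------------------

def Mono01 (f : ℝ → ℝ) : Prop := ∀ ⦃x y : ℝ⦄, 0 < x → x ≤ y → y < 1 → f x ≤ f y
def Anti01 (f : ℝ → ℝ) : Prop := ∀ ⦃x y : ℝ⦄, 0 < x → x ≤ y → y < 1 → f y ≤ f x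

lemma RZ_zero1 (k : ℤ) (hk : 0 ≤ k) (p : ℝ) : RZ 0 k p = 1 := by
  rw [RZ_zero_eq, if_pos hk]

theorem ACD : ∀ n : ℕ,
    (∀ k, Mono01 (aA n k)) ∧ (∀ k, ∀ ⦃p : ℝ⦄, 0 < p → p < 1 → cC n k p ≤ cC n (k+2) p) ∧
    (∀ k, Anti01 (cC n k)) ∧ (∀ k, Mono01 (dD n k)) := by
  intro n
  induction n with
  | zero =>
    have ha : ∀ k, Mono01 (aA 0 k) := by
      intro k x y hx hxy hy1
      unfold aA
      rw [RZ_zero1 _ (by positivity), RZ_zero1 _ (by positivity),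
          RZ_zero1 _ (by positivity), RZ_zero1 _ (by positivity)]
      have hx1 : x < 1 := lt_of_le_of_lt hxy hy1
      rw [mul_one, mul_one, mul_one, mul_one, div_le_div_iff₀ (by linarith) (by linarith)]
      nlinarith
    have hc : ∀ k, ∀ ⦃p : ℝ⦄, 0 < p → p < 1 → cC 0 k p ≤ cC 0 (k+2) p := by
      intro k p hp0 hp1
      unfold cC
      rw [RZ_zero1 _ (by positivity), RZ_zero1 _ (by positivity),
          RZ_zero1 _ (by positivity), RZ_zero1 _ (by positivity)]
    have hca : ∀ k, Anti01 (cC 0 k) := by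
      intro k x y hx hxy hy1
      unfold cC
      rw [RZ_zero1 _ (by positivity), RZ_zero1 _ (by positivity),
          RZ_zero1 _ (by positivity), RZ_zero1 _ (by positivity)]
    have hd : ∀ k, Mono01 (dD 0 k) := by
      intro k x y hx hxy hy1
      unfold dD
      rw [RZ_zero1 _ (by positivity), RZ_zero1 _ (by positivity),
          RZ_zero1 _ (by positivity), RZ_zero1 _ (by positivity)]
      have hx1 : x < 1 := lt_of_le_of_lt hxy hy1
      rw [mul_one, mul_one, mul_one, mul_one, div_le_div_iff₀ (by linarith) (by linarith)]
      nlinarith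
    exact ⟨ha, hc, hca, hd⟩
  | succ n ih =>
    obtain ⟨iha, ihc, ihca, ihd⟩ := ih
    have HA : ∀ k, Mono01 (aA (n+1) k) := by
      intro k x y hx hxy hy1
      have hx1 : x < 1 := lt_of_le_of_lt hxy hy1
      have hy0 : 0 < y := lt_of_lt_of_le hx hxy
      match k with
      | 0 =>
        rw [id_a0 hx hx1 n, id_a0 hy0 hy1 n]
        exact div_one_add_mono (aA_nonneg n 1 x hx hx1) (iha 1 hx hxy hy1)
      | (k+1) =>
        rw [id_aS hx hx1 n k, id_aS hy0 hy1 n k]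
        have h1 : 1 + aA n k x ≤ 1 + aA n k y := by linarith [iha k hx hxy hy1]
        have h2 : aA n (k+2) x / (1 + aA n (k+2) x) ≤ aA n (k+2) y / (1 + aA n (k+2) y) :=
          div_one_add_mono (aA_nonneg n (k+2) x hx hx1) (iha (k+2) hx hxy hy1)
        have h3 : 0 ≤ aA n (k+2) x / (1 + aA n (k+2) x) := by
          have := aA_nonneg n (k+2) x hx hx1
          positivity
        have h4 : 0 ≤ 1 + aA n k y := by linarith [aA_nonneg n k y hy0 hy1]
        exact mul_le_mul h1 h2 h3 h4
    have HO : ∀ k, ∀ ⦃p : ℝ⦄, 0 < p → p < 1 → cC (n+1) k p ≤ cC (n+1) (k+2) p := by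
      intro k p hp0 hp1
      match k with
      | 0 =>
        have h1 : cC (n+1) 0 p ≤ cC n 1 p := by
          rw [id_c0 hp0 hp1 n]
          have hc1 := cC_pos n 1 p hp0 hp1
          have hd0 := dD_pos n 0 p hp0 hp1
          have : 1 / cC n 1 p ≤ dD n 0 p + 1 / cC n 1 p := by linarith
          calc 1 / (dD n 0 p + 1 / cC n 1 p) ≤ 1 / (1 / cC n 1 p) :=
                one_div_le_one_div_of_le (by positivity) this
          _ = cC n 1 p := one_div_one_div _
        have h2 : cC n 1 p ≤ cC (n+1) 2 p := by
          rw [show (2:ℕ) = 1+1 from rfl, id_cS hp0 hp1 n 1]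
          exact fst_le_avg (aA_nonneg n 2 p hp0 hp1) (ihc 1 hp0 hp1)
        linarith
      | (k+1) =>
        have h1 : cC (n+1) (k+1) p ≤ cC n (k+2) p := by
          rw [id_cS hp0 hp1 n k]
          exact avg_le_snd (aA_nonneg n (k+1) p hp0 hp1) (ihc k hp0 hp1)
        have h2 : cC n (k+2) p ≤ cC (n+1) (k+3) p := by
          rw [show k+1+2 = (k+2)+1 from rfl, id_cS hp0 hp1 n (k+2)]
          exact fst_le_avg (aA_nonneg n (k+3) p hp0 hp1) (ihc (k+2) hp0 hp1)
        linarith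
    have HC : ∀ k, Anti01 (cC (n+1) k) := by
      intro k x y hx hxy hy1
      have hx1 : x < 1 := lt_of_le_of_lt hxy hy1
      have hy0 : 0 < y := lt_of_lt_of_le hx hxy
      match k with
      | 0 =>
        rw [id_c0 hx hx1 n, id_c0 hy0 hy1 n]
        have hc1x := cC_pos n 1 x hx hx1
        have hc1y := cC_pos n 1 y hy0 hy1
        have hd0x := dD_pos n 0 x hx hx1
        apply one_div_le_one_div_of_le (by positivity)
        have e1 : dD n 0 x ≤ dD n 0 y := ihd 0 hx hxy hy1
        have e2 : 1 / cC n 1 x ≤ 1 / cC n 1 y :=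
          one_div_le_one_div_of_le hc1y (ihca 1 hx hxy hy1)
        linarith
      | (k+1) =>
        rw [id_cS hx hx1 n k, id_cS hy0 hy1 n k]
        exact avg_anti (aA_nonneg n (k+1) x hx hx1) (iha (k+1) hx hxy hy1)
          (ihc k hx hx1) (ihca k hx hxy hy1) (ihca (k+2) hx hxy hy1)
    have HD : ∀ k, Mono01 (dD (n+1) k) := by
      intro k x y hx hxy hy1
      have hx1 : x < 1 := lt_of_le_of_lt hxy hy1
      have hy0 : 0 < y := lt_of_lt_of_le hx hxy
      rw [id_d hx hx1 (n+1) k, id_d hy0 hy1 (n+1) k]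
      exact div_le_div₀ (aA_nonneg (n+1) k y hy0 hy1) (HA k hx hxy hy1)
        (cC_pos (n+1) (k+1) y hy0 hy1) (HC (k+1) hx hxy hy1)
    exact ⟨HA, HO, HC, HD⟩

lemma rr_zero_eval (p : ℝ) (j : ℕ) :
    rr 0 j p = piVal p 0 j := by
  unfold rr
  rw [RZ_zero1 _ (by positivity), div_one]

theorem RRmain : ∀ n : ℕ,
    (∀ j, Mono01 (rr n j)) ∧ (∀ j, ∀ ⦃p : ℝ⦄, 0 < p → p < 1 → rr n (j+2) p ≤ rr n j p) := by
  intro n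
  induction n with
  | zero =>
    constructor
    · intro j x y hx hxy hy1
      rw [rr_zero_eval, rr_zero_eval]
      match j with
      | 0 => exact le_of_eq (rfl : (1:ℝ) = 1)
      | 1 => exact le_of_eq (rfl : (1:ℝ) = 1)
      | (j+2) => exact le_of_eq (rfl : (0:ℝ) = 0)
    · intro j p hp0 hp1
      rw [rr_zero_eval, rr_zero_eval]
      match j with
      | 0 => exact (by norm_num : (0:ℝ) ≤ 1)
      | 1 => exact (by norm_num : (0:ℝ) ≤ 1)
      | (j+2) => exact le_of_eq (rfl : (0:ℝ) = 0)
  | succ n ih =>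
    obtain ⟨ihm, iho⟩ := ih
    obtain ⟨iha, ihc, ihca, ihd⟩ := ACD n
    have HM : ∀ j, Mono01 (rr (n+1) j) := by
      intro j x y hx hxy hy1
      have hx1 : x < 1 := lt_of_le_of_lt hxy hy1
      have hy0 : 0 < y := lt_of_lt_of_le hx hxy
      match j with
      | 0 =>
        rw [id_r0 hx hx1 n, id_r0 hy0 hy1 n]
        have h1 : dD n 0 x * rr n 0 x ≤ dD n 0 y * rr n 0 y :=
          mul_le_mul (ihd 0 hx hxy hy1) (ihm 0 hx hxy hy1)
            (rr_nonneg n 0 x hx hx1) (dD_pos n 0 y hy0 hy1).le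
        have h2 : rr n 1 x ≤ rr n 1 y := ihm 1 hx hxy hy1
        linarith
      | 1 =>
        rw [id_r1 hx hx1 n, id_r1 hy0 hy1 n]
        apply max_le_max le_rfl
        exact avg_mono (aA_nonneg n 0 x hx hx1) (iha 0 hx hxy hy1)
          (iho 0 hx hx1) (ihm 0 hx hxy hy1) (ihm 2 hx hxy hy1)
      | (j+2) =>
        rw [id_rS hx hx1 n j, id_rS hy0 hy1 n j]
        exact avg_mono (aA_nonneg n (j+1) x hx hx1) (iha (j+1) hx hxy hy1)
          (iho (j+1) hx hx1) (ihm (j+1) hx hxy hy1) (ihm (j+3) hx hxy hy1)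
    have HO : ∀ j, ∀ ⦃p : ℝ⦄, 0 < p → p < 1 → rr (n+1) (j+2) p ≤ rr (n+1) j p := by
      intro j p hp0 hp1
      match j with
      | 0 =>
        have h1 : rr (n+1) 2 p ≤ rr n 1 p := by
          rw [show (2:ℕ) = 0+2 from rfl, id_rS hp0 hp1 n 0]
          exact avg_le_fst (aA_nonneg n 1 p hp0 hp1) (iho 1 hp0 hp1)
        have h2 : rr n 1 p ≤ rr (n+1) 0 p := by
          rw [id_r0 hp0 hp1 n]
          have := mul_nonneg (dD_pos n 0 p hp0 hp1).le (rr_nonneg n 0 p hp0 hp1)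
          linarith
        linarith
      | 1 =>
        have h1 : rr (n+1) 3 p ≤ rr n 2 p := by
          rw [show (3:ℕ) = 1+2 from rfl, id_rS hp0 hp1 n 1]
          exact avg_le_fst (aA_nonneg n 2 p hp0 hp1) (iho 2 hp0 hp1)
        have h2 : rr n 2 p ≤ rr (n+1) 1 p := by
          rw [id_r1 hp0 hp1 n]
          refine le_trans ?_ (le_max_right _ _)
          exact snd_le_avg (aA_nonneg n 0 p hp0 hp1) (iho 0 hp0 hp1)
        linarith
      | (j+2) =>
        have h1 : rr (n+1) (j+4) p ≤ rr n (j+3) p := by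
          rw [show j+2+2 = (j+2)+2 from rfl, id_rS hp0 hp1 n (j+2)]
          exact avg_le_fst (aA_nonneg n (j+3) p hp0 hp1) (iho (j+3) hp0 hp1)
        have h2 : rr n (j+3) p ≤ rr (n+1) (j+2) p := by
          rw [id_rS hp0 hp1 n j]
          exact snd_le_avg (aA_nonneg n (j+1) p hp0 hp1) (iho (j+1) hp0 hp1)
        linarith
    exact ⟨HM, HO⟩

theorem WU_mono (n : ℕ) : Mono01 (fun p => W (n+1) p / U (n+1) p) := by
  intro x y hx hxy hy1
  have hx1 : x < 1 := lt_of_le_of_lt hxy hy1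
  have hy0 : 0 < y := lt_of_lt_of_le hx hxy
  obtain ⟨ihm, iho⟩ := RRmain n
  obtain ⟨iha, -, -, -⟩ := ACD n
  simp only
  rw [id_WoverU hx hx1 n, id_WoverU hy0 hy1 n]
  exact avg_mono (aA_nonneg n 0 x hx hx1) (iha 0 hx hxy hy1)
    (iho 0 hx hx1) (ihm 0 hx hxy hy1) (ihm 2 hx hxy hy1)

------------------------------------------------------------------
-- continuity
------------------------------------------------------------------

lemma continuous_U (n : ℕ) : Continuous (fun p => U n p) := by
  unfold U walkProb
  apply continuous_finset_sum
  intro x _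
  by_cases h : x ∈ {x | walkM n x ≤ 1}
  · simp only [if_pos h]
    unfold pathProb
    exact (continuous_pow _).mul ((continuous_const.sub continuous_id).pow _)
  · simp only [if_neg h]
    exact continuous_const

lemma continuous_piVal : ∀ n j, Continuous (fun p => piVal p n j) := by
  intro n
  induction n with
  | zero =>
    intro j
    match j with
    | 0 =>
      have : (fun p : ℝ => piVal p 0 0) = fun _ => (1:ℝ) := funext fun p => rfl
      rw [this]; exact continuous_const
    | 1 =>
      have : (fun p : ℝ => piVal p 0 1) = fun _ => (1:ℝ) := funext fun p => rfl
      rw [this]; exact continuous_const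
    | (j+2) =>
      have : (fun p : ℝ => piVal p 0 (j+2)) = fun _ => (0:ℝ) := funext fun p => rfl
      rw [this]; exact continuous_const
  | succ n ih =>
    intro j
    match j with
    | 0 =>
      simp only [piVal_zero]
      exact (continuous_id.mul (ih 0)).add ((continuous_const.sub continuous_id).mul (ih 1))
    | 1 =>
      simp only [piVal_one]
      exact (continuous_U (n+1)).max
        ((continuous_id.mul (ih 0)).add ((continuous_const.sub continuous_id).mul (ih 2)))
    | (j+2) =>
      simp only [piVal_two]
      exact (continuous_id.mul (ih (j+1))).add
        ((continuous_const.sub continuous_id).mul (ih (j+3)))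

lemma continuous_W (n : ℕ) : Continuous (fun p => W n p) := by
  unfold W
  exact (continuous_id.mul (continuous_piVal _ 0)).add
    ((continuous_const.sub continuous_id).mul (continuous_piVal _ 2))

lemma U_pos (n : ℕ) {p : ℝ} (hp0 : 0 < p) (hp1 : p < 1) : 0 < U n p := by
  rw [U_eq_RZ]
  exact RZ_pos n 1 p (by norm_num) hp0 hp1


/-- For every `n ≥ 1`, stopping is optimal in state `(n,1)` exactly on a left interval
with right endpoint `p_n`: for `p ∈ (0,1)`, `U_n(p) ≥ W_n(p)` iff `p ≤ pc n`. -/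
theorem stopping_set_is_left_interval (n : ℕ) (hn : 1 ≤ n) (p : ℝ)
    (hp : p ∈ Set.Ioo (0 : ℝ) 1) :
    U n p ≥ W n p ↔ p ≤ pc n := by
  obtain ⟨m, rfl⟩ : ∃ m, n = m + 1 := ⟨n - 1, (Nat.succ_pred_eq_of_pos hn).symm⟩
  obtain ⟨hp0, hp1⟩ := hp
  set A : Set ℝ := {q : ℝ | q ∈ Set.Ioo (0 : ℝ) 1 ∧ U (m+1) q ≥ W (m+1) q} with hA
  have hbdd : BddAbove A := ⟨1, fun q hq => (hq.1.2).le⟩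
  have down : ∀ x y : ℝ, 0 < x → x ≤ y → y < 1 →
      U (m+1) y ≥ W (m+1) y → U (m+1) x ≥ W (m+1) x := by
    intro x y hx hxy hy1 hUy
    have hx1 : x < 1 := lt_of_le_of_lt hxy hy1
    have hy0 : 0 < y := lt_of_lt_of_le hx hxy
    have hUyp := U_pos (m+1) hy0 hy1
    have hUxp := U_pos (m+1) hx hx1
    have h1 : W (m+1) y / U (m+1) y ≤ 1 := by
      rw [div_le_one hUyp]
      exact hUy
    have h2 : W (m+1) x / U (m+1) x ≤ W (m+1) y / U (m+1) y :=
      WU_mono m hx hxy hy1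
    rw [ge_iff_le, ← div_le_one hUxp]
    linarith
  constructor
  · intro hUW
    exact le_csSup hbdd ⟨⟨hp0, hp1⟩, hUW⟩
  · intro hle
    by_contra hUW
    have hne : A.Nonempty := by
      by_contra hne
      rw [Set.not_nonempty_iff_eq_empty] at hne
      rw [pc, ← hA, hne, Real.sSup_empty] at hle
      linarith
    -- every element of A is < p
    have hlt : ∀ q ∈ A, q < p := by
      intro q hq
      by_contra hqp
      push_neg at hqp
      exact hUW (down p q hp0 hqp hq.1.2 hq.2)
    -- continuity gives a gap
    have hc : ContinuousAt (fun q => U (m+1) q - W (m+1) q) p :=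
      ((continuous_U (m+1)).sub (continuous_W (m+1))).continuousAt
    have hval : U (m+1) p - W (m+1) p < 0 := by
      rw [ge_iff_le] at hUW
      push_neg at hUW
      linarith
    obtain ⟨δ, hδ0, hδ⟩ := Metric.continuousAt_iff.mp hc
      (-(U (m+1) p - W (m+1) p)) (by linarith)
    have hgap : ∀ q ∈ A, q ≤ p - δ := by
      intro q hq
      by_contra hqgap
      push_neg at hqgap
      have hdist : dist q p < δ := by
        rw [Real.dist_eq, abs_lt]
        constructor
        · linarith
        · linarith [hlt q hq]
      have := hδ hdist
      rw [Real.dist_eq, abs_lt] at this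
      have hq2 : U (m+1) q - W (m+1) q ≥ 0 := by
        have := hq.2
        linarith [this]
      linarith [this.2]
    have : sSup A ≤ p - δ := csSup_le hne hgap
    rw [pc, ← hA] at hle
    linarith
end

section
/- The critical values satisfy p_1 = 1 and p_2 = p_3 = 1/2. -/
open Finset

private lemma sum_succ' {n : ℕ} (f : (Fin (n+1) → Bool) → ℝ) :
    ∑ x : Fin (n+1) → Bool, f x = ∑ b : Bool, ∑ y : Fin n → Bool, f (Fin.cons b y) := by
  rw [← Equiv.sum_comp (Fin.consEquiv (fun _ => Bool)) f, Fintype.sum_prod_type]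
  rfl

private lemma sum_zero' (f : (Fin 0 → Bool) → ℝ) : ∑ x : Fin 0 → Bool, f x = f finZeroElim := by
  rw [Fintype.sum_eq_single finZeroElim]
  intro y hy; exact absurd (funext fun i => i.elim0) hy

private lemma U_one (p : ℝ) : U 1 p = 1 := by
  rw [U, walkProb, sum_succ']
  simp only [sum_zero', Fintype.sum_bool, Set.mem_setOf_eq]
  rw [if_pos (by decide), if_pos (by decide), pathProb, pathProb,
    show (Finset.univ.filter fun i => (Fin.cons true finZeroElim : Fin 1 → Bool) i = true).card = 1 from by decide,
    show (Finset.univ.filter fun i => (Fin.cons false finZeroElim : Fin 1 → Bool) i = true).card = 0 from by decide]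
  ring

private lemma U_two (p : ℝ) : U 2 p = 1 - p^2 := by
  rw [U, walkProb, sum_succ']
  simp only [sum_succ', sum_zero', Fintype.sum_bool, Set.mem_setOf_eq]
  rw [if_neg (by decide), if_pos (by decide), if_pos (by decide), if_pos (by decide)]
  simp only [pathProb]
  rw [show (Finset.univ.filter fun i => (Fin.cons true (Fin.cons false finZeroElim) : Fin 2 → Bool) i = true).card = 1 from by decide,
    show (Finset.univ.filter fun i => (Fin.cons false (Fin.cons true finZeroElim) : Fin 2 → Bool) i = true).card = 1 from by decide,
    show (Finset.univ.filter fun i => (Fin.cons false (Fin.cons false finZeroElim) : Fin 2 → Bool) i = true).card = 0 from by decide]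
  ring

private lemma U_three (p : ℝ) : U 3 p = 1 - p^2 := by
  rw [U, walkProb, sum_succ']
  simp only [sum_succ', sum_zero', Fintype.sum_bool, Set.mem_setOf_eq]
  rw [if_neg (by decide), if_neg (by decide), if_pos (by decide), if_pos (by decide),
    if_pos (by decide), if_pos (by decide), if_pos (by decide), if_pos (by decide)]
  simp only [pathProb]
  rw [show (Finset.univ.filter fun i => (Fin.cons true (Fin.cons false (Fin.cons true finZeroElim)) : Fin 3 → Bool) i = true).card = 2 from by decide,
    show (Finset.univ.filter fun i => (Fin.cons true (Fin.cons false (Fin.cons false finZeroElim)) : Fin 3 → Bool) i = true).card = 1 from by decide,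
    show (Finset.univ.filter fun i => (Fin.cons false (Fin.cons true (Fin.cons true finZeroElim)) : Fin 3 → Bool) i = true).card = 2 from by decide,
    show (Finset.univ.filter fun i => (Fin.cons false (Fin.cons true (Fin.cons false finZeroElim)) : Fin 3 → Bool) i = true).card = 1 from by decide,
    show (Finset.univ.filter fun i => (Fin.cons false (Fin.cons false (Fin.cons true finZeroElim)) : Fin 3 → Bool) i = true).card = 1 from by decide,
    show (Finset.univ.filter fun i => (Fin.cons false (Fin.cons false (Fin.cons false finZeroElim)) : Fin 3 → Bool) i = true).card = 0 from by decide]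
  ring

private lemma W_one (p : ℝ) : W 1 p = p := by simp [W, piVal]

private lemma W_two (p : ℝ) : W 2 p = 2*p - p^2 := by simp [W, piVal]; ring

private lemma W_three (p : ℝ) (hp : p ≤ 1) : W 3 p = 2*p - p^2 := by
  simp [W, piVal, U_one, max_eq_left hp]; ring

/-- `p_1 = 1` and `p_2 = p_3 = 1/2`. -/
theorem pc_one_two_three : pc 1 = 1 ∧ pc 2 = 1 / 2 ∧ pc 3 = 1 / 2 := by
  refine ⟨?_, ?_, ?_⟩
  · rw [pc, show {p : ℝ | p ∈ Set.Ioo (0 : ℝ) 1 ∧ U 1 p ≥ W 1 p} = Set.Ioo (0:ℝ) 1 from ?_]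
    · exact csSup_Ioo (by norm_num)
    · ext p
      simp only [Set.mem_setOf_eq, Set.mem_Ioo, U_one, W_one, and_iff_left_iff_imp]
      exact fun h => le_of_lt h.2
  · rw [pc, show {p : ℝ | p ∈ Set.Ioo (0 : ℝ) 1 ∧ U 2 p ≥ W 2 p} = Set.Ioc (0:ℝ) (1/2) from ?_]
    · exact csSup_Ioc (by norm_num)
    · ext p
      simp only [Set.mem_setOf_eq, Set.mem_Ioo, Set.mem_Ioc, U_two, W_two]
      constructor
      · rintro ⟨⟨h0, _⟩, h⟩; exact ⟨h0, by linarith⟩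
      · rintro ⟨h0, h⟩; exact ⟨⟨h0, by linarith⟩, by linarith⟩
  · rw [pc, show {p : ℝ | p ∈ Set.Ioo (0 : ℝ) 1 ∧ U 3 p ≥ W 3 p} = Set.Ioc (0:ℝ) (1/2) from ?_]
    · exact csSup_Ioc (by norm_num)
    · ext p
      simp only [Set.mem_setOf_eq, Set.mem_Ioo, Set.mem_Ioc, U_three]
      constructor
      · rintro ⟨⟨h0, h1⟩, h⟩
        rw [W_three p (le_of_lt h1)] at h
        exact ⟨h0, by linarith⟩
      · rintro ⟨h0, h⟩
        have h1 : p < 1 := by linarith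
        rw [W_three p (le_of_lt h1)]
        exact ⟨⟨h0, h1⟩, by linarith⟩
end

section
/- For every integer n ≥ 0, the probability that the maximum of the random walk stays at most 1 satisfies U_{2n}(p) = U_{2n+1}(p) = 1 − Σ_{j=1}^{n} t_{j+1} p^{j+1} q^{j-1}, where t_m := (1/m)·C(2m−2, m−1). -/
open Finset

namespace WalkAux

/-- balance of a boolean list -/
def bal (l : List Bool) : ℤ := (l.count true : ℤ) - (l.count false : ℤ)

@[simp] lemma bal_nil : bal [] = 0 := rfl

lemma bal_concat (l : List Bool) (b : Bool) :
    bal (l ++ [b]) = bal l + (if b then 1 else -1) := by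
  cases b <;> simp [bal, List.count_append] <;> ring

lemma count_true_add_count_false (l : List Bool) :
    l.count true + l.count false = l.length := by
  induction l with
  | nil => simp
  | cons a t ih => cases a <;> simp [List.count_cons] <;> omega

@[simp] lemma walkS_zero (N : ℕ) (x : Fin N → Bool) : walkS N x 0 = 0 := by
  simp [walkS]

lemma walkS_succ (N : ℕ) (x : Fin N → Bool) (j : ℕ) :
    walkS N x (j + 1) = walkS N x j +
      (if h : j < N then (if x ⟨j, h⟩ then 1 else -1) else 0) := by
  unfold walkS
  by_cases h : j < N
  · rw [dif_pos h]
    have hins : Finset.univ.filter (fun i : Fin N => (i : ℕ) < j + 1) =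
        insert ⟨j, h⟩ (Finset.univ.filter (fun i : Fin N => (i : ℕ) < j)) := by
      ext i
      simp [Fin.ext_iff]
      omega
    rw [hins, Finset.sum_insert (by simp)]
    ring
  · rw [dif_neg h]
    have : Finset.univ.filter (fun i : Fin N => (i : ℕ) < j + 1) =
        Finset.univ.filter (fun i : Fin N => (i : ℕ) < j) := by
      ext i
      have := i.isLt
      simp
      omega
    rw [this]
    ring

lemma walkS_eq_bal (N : ℕ) (x : Fin N → Bool) (j : ℕ) :
    walkS N x j = bal ((List.ofFn x).take j) := by
  induction j with
  | zero => simp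
  | succ j ih =>
    rw [walkS_succ, ih]
    by_cases h : j < N
    · rw [dif_pos h]
      have htake : (List.ofFn x).take (j + 1) = (List.ofFn x).take j ++ [x ⟨j, h⟩] := by
        rw [List.take_succ]
        congr 1
        simp [List.getElem?_ofFn, List.ofFnNthVal, h]
      rw [htake, bal_concat]
    · rw [dif_neg h]
      have h1 : (List.ofFn x).take (j + 1) = List.ofFn x :=
        List.take_of_length_le (by simp; omega)
      have h2 : (List.ofFn x).take j = List.ofFn x :=
        List.take_of_length_le (by simp; omega)
      rw [h1, h2]
      ring

lemma walkM_le_iff (N : ℕ) (x : Fin N → Bool) (c : ℤ) :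
    walkM N x ≤ c ↔ ∀ j ≤ N, walkS N x j ≤ c := by
  unfold walkM
  rw [Finset.sup'_le_iff]
  constructor
  · intro h j hj
    exact h j (Finset.mem_range.mpr (by omega))
  · intro h j hj
    exact h j (Nat.lt_succ_iff.mp (Finset.mem_range.mp hj))

lemma pathProb_eq_prod (p : ℝ) (N : ℕ) (x : Fin N → Bool) :
    pathProb p N x = ∏ i : Fin N, (if x i then p else 1 - p) := by
  unfold pathProb
  rw [Finset.prod_ite, Finset.prod_const, Finset.prod_const]
  congr 2
  have := Finset.card_filter_add_card_filter_not
    (s := (Finset.univ : Finset (Fin N))) (p := fun i => x i = true)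
  simp only [Finset.card_univ, Fintype.card_fin] at this
  omega

lemma pathProb_snoc (p : ℝ) (N : ℕ) (x : Fin N → Bool) (b : Bool) :
    pathProb p (N + 1) (Fin.snoc x b) = pathProb p N x * (if b then p else 1 - p) := by
  rw [pathProb_eq_prod, pathProb_eq_prod, Fin.prod_univ_castSucc]
  simp

/-- The first-passage event: the walk stays `≤ 1` strictly before time `N`
and equals `2` at time `N`. -/
def HitSet (N : ℕ) : Set (Fin N → Bool) :=
  {x | (∀ k < N, walkS N x k ≤ 1) ∧ walkS N x N = 2}

lemma walkS_snoc (N : ℕ) (x : Fin N → Bool) (b : Bool) {j : ℕ} (hj : j ≤ N) :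
    walkS (N + 1) (Fin.snoc x b) j = walkS N x j := by
  rw [walkS_eq_bal, walkS_eq_bal]
  have hofn : List.ofFn (Fin.snoc x b : Fin (N+1) → Bool) = List.ofFn x ++ [b] := by
    rw [List.ofFn_succ']
    simp [List.concat_eq_append]
  rw [hofn, List.take_append_of_le_length (by simp; omega)]

lemma walkS_snoc_last (N : ℕ) (x : Fin N → Bool) (b : Bool) :
    walkS (N + 1) (Fin.snoc x b) (N + 1) = walkS N x N + (if b then 1 else -1) := by
  rw [walkS_succ, walkS_snoc N x b (le_refl N), dif_pos (Nat.lt_succ_self N)]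
  congr 2
  have h : (⟨N, Nat.lt_succ_self N⟩ : Fin (N+1)) = Fin.last N := rfl
  rw [h, Fin.snoc_last]

lemma U_succ (p : ℝ) (N : ℕ) :
    U (N + 1) p = U N p - walkProb p (N + 1) (HitSet (N + 1)) := by
  classical
  have key : ∀ x : Fin (N+1) → Bool,
      (@ite ℝ (x ∈ {y : Fin (N+1) → Bool | walkM (N+1) y ≤ 1}) (Classical.propDecidable _)
        (pathProb p (N+1) x) 0)
      = (if walkM N (Fin.init x) ≤ 1 then pathProb p (N+1) x else 0)
        - (if x ∈ HitSet (N+1) then pathProb p (N+1) x else 0) := by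
    intro x
    have hx : Fin.snoc (Fin.init x) (x (Fin.last N)) = x := Fin.snoc_init_self x
    have hS : ∀ j ≤ N, walkS (N+1) x j = walkS N (Fin.init x) j := by
      intro j hj
      conv_lhs => rw [← hx]
      exact walkS_snoc _ _ _ hj
    have hA : walkM (N+1) x ≤ 1 ↔
        (walkM N (Fin.init x) ≤ 1 ∧ walkS (N+1) x (N+1) ≤ 1) := by
      rw [walkM_le_iff, walkM_le_iff]
      constructor
      · intro h
        exact ⟨fun j hj => (hS j hj) ▸ h j (by omega), h (N+1) le_rfl⟩
      · rintro ⟨h1, h2⟩ j hj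
        rcases Nat.lt_or_ge j (N+1) with h | h
        · rw [hS j (by omega)]; exact h1 j (by omega)
        · have hj' : j = N+1 := by omega
          rw [hj']; exact h2
    have hC : x ∈ HitSet (N+1) ↔
        (walkM N (Fin.init x) ≤ 1 ∧ walkS (N+1) x (N+1) = 2) := by
      unfold HitSet
      rw [walkM_le_iff]
      constructor
      · rintro ⟨h1, h2⟩
        exact ⟨fun j hj => (hS j hj) ▸ h1 j (by omega), h2⟩
      · rintro ⟨h1, h2⟩
        refine ⟨fun k hk => ?_, h2⟩
        rw [hS k (by omega)]; exact h1 k (by omega)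
    have hstep : walkS (N+1) x (N+1) ≤ walkS (N+1) x N + 1 := by
      rw [walkS_succ, dif_pos (Nat.lt_succ_self N)]
      split_ifs <;> omega
    have hB2 : walkM N (Fin.init x) ≤ 1 → walkS (N+1) x (N+1) ≤ 2 := by
      intro hB
      have := (walkM_le_iff N (Fin.init x) 1).mp hB N le_rfl
      rw [← hS N le_rfl] at this
      omega
    simp only [Set.mem_setOf_eq, hA, hC]
    by_cases hB : walkM N (Fin.init x) ≤ 1
    · have h2 := hB2 hB
      by_cases hs : walkS (N+1) x (N+1) = 2
      · rw [if_neg (by simp [hs]), if_pos hB, if_pos ⟨hB, hs⟩]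
        ring
      · rw [if_pos ⟨hB, by omega⟩, if_pos hB, if_neg (by simp [hs])]
        ring
    · rw [if_neg (by simp [hB]), if_neg hB, if_neg (by simp [hB])]
      ring
  have hUN : ∑ x : Fin (N+1) → Bool,
      (if walkM N (Fin.init x) ≤ 1 then pathProb p (N+1) x else 0) = U N p := by
    calc ∑ x : Fin (N+1) → Bool,
        (if walkM N (Fin.init x) ≤ 1 then pathProb p (N+1) x else 0)
        = ∑ z : Bool × (Fin N → Bool),
            (if walkM N z.2 ≤ 1 then pathProb p N z.2 else 0) * (if z.1 then p else 1 - p) := by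
          rw [← Equiv.sum_comp (Fin.snocEquiv (fun _ => Bool))]
          apply Finset.sum_congr rfl
          intro z _
          have he : (Fin.snocEquiv (fun _ => Bool)) z = Fin.snoc z.2 z.1 := rfl
          rw [he, Fin.init_snoc, pathProb_snoc]
          split_ifs <;> ring
      _ = (∑ y : Fin N → Bool, if walkM N y ≤ 1 then pathProb p N y else 0) * p
          + (∑ y : Fin N → Bool, if walkM N y ≤ 1 then pathProb p N y else 0) * (1 - p) := by
          rw [Fintype.sum_prod_type, Fintype.sum_bool]
          simp [Finset.sum_mul]
      _ = U N p := by
          rw [U, walkProb]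
          simp only [Set.mem_setOf_eq]
          ring
  rw [U, walkProb, ← hUN, walkProb, ← Finset.sum_sub_distrib]
  exact Finset.sum_congr rfl (fun x _ => key x)

lemma walkS_full (N : ℕ) (x : Fin N → Bool) :
    walkS N x N = 2 * ((Finset.univ.filter (fun i => x i = true)).card : ℤ) - N := by
  have huniv : Finset.univ.filter (fun i : Fin N => (i : ℕ) < N) = Finset.univ := by
    ext i; simp [i.isLt]
  unfold walkS
  rw [huniv]
  have h : ∀ i : Fin N, (if x i then (1 : ℤ) else -1)
      = 2 * (if x i = true then (1 : ℤ) else 0) - 1 := by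
    intro i
    by_cases h : x i = true <;> simp [h]
  rw [Finset.sum_congr rfl (fun i _ => h i), Finset.sum_sub_distrib, ← Finset.mul_sum,
    Finset.sum_boole, Finset.sum_const, Finset.card_univ, Fintype.card_fin]
  simp

lemma hitSet_odd (N : ℕ) (hN : N % 2 = 1) : HitSet N = ∅ := by
  ext x
  simp only [HitSet, Set.mem_setOf_eq, Set.mem_empty_iff_false, iff_false, not_and]
  intro _ h2
  have := walkS_full N x
  omega

lemma walkProb_empty (p : ℝ) (N : ℕ) : walkProb p N (∅ : Set (Fin N → Bool)) = 0 := by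
  simp [walkProb]

open Classical in
lemma walkProb_hit (p : ℝ) (j : ℕ) :
    walkProb p (2 * (j + 1)) (HitSet (2 * (j + 1))) =
      (Fintype.card {x : Fin (2 * (j + 1)) → Bool // x ∈ HitSet (2 * (j + 1))}) *
        (p ^ (j + 2) * (1 - p) ^ j) := by
  have hconst : ∀ x : Fin (2*(j+1)) → Bool, x ∈ HitSet (2*(j+1)) →
      pathProb p (2*(j+1)) x = p ^ (j + 2) * (1 - p) ^ j := by
    intro x hx
    have h2 := hx.2
    have hfull := walkS_full (2*(j+1)) x
    have hcard : (Finset.univ.filter (fun i => x i = true)).card = j + 2 := by omega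
    unfold pathProb
    rw [hcard, show 2*(j+1) - (j+2) = j from by omega]
  rw [walkProb]
  rw [Finset.sum_congr rfl (fun x _ => show (if x ∈ HitSet (2*(j+1)) then pathProb p (2*(j+1)) x else 0)
      = (if x ∈ HitSet (2*(j+1)) then p ^ (j + 2) * (1 - p) ^ j else 0) from by
    split_ifs with h
    · exact hconst x h
    · rfl)]
  rw [← Finset.sum_filter, Finset.sum_const, nsmul_eq_mul]
  congr 1
  rw [Fintype.card_subtype]

/-! ### Counting first-passage paths via Dyck words -/

/-- The property of being a first-passage-to-2 path, in terms of the list of steps. -/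
def HitL (l : List Bool) : Prop :=
  (∀ k < l.length, bal (l.take k) ≤ 1) ∧ bal l = 2

lemma hitSet_iff_hitL (N : ℕ) (x : Fin N → Bool) :
    x ∈ HitSet N ↔ HitL (List.ofFn x) := by
  have htake : (List.ofFn x).take N = List.ofFn x :=
    List.take_of_length_le (by simp)
  simp only [HitSet, HitL, Set.mem_setOf_eq, List.length_ofFn]
  constructor
  · rintro ⟨h1, h2⟩
    refine ⟨fun k hk => ?_, ?_⟩
    · rw [← walkS_eq_bal]; exact h1 k hk
    · rw [← htake, ← walkS_eq_bal]; exact h2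
  · rintro ⟨h1, h2⟩
    refine ⟨fun k hk => ?_, ?_⟩
    · rw [walkS_eq_bal]; exact h1 k hk
    · rw [walkS_eq_bal, htake]; exact h2

open Classical in
/-- Generic equivalence between predicates on tuples and on lists. -/
def funListEquiv (n : ℕ) (P : List Bool → Prop) :
    {x : Fin n → Bool // P (List.ofFn x)} ≃ {l : List Bool // l.length = n ∧ P l} where
  toFun x := ⟨List.ofFn x.1, by simp, x.2⟩
  invFun l := ⟨fun i => l.1[i.val]'(by rw [l.2.1]; exact i.isLt), by
    have h : List.ofFn (fun i : Fin n => l.1[i.val]'(by rw [l.2.1]; exact i.isLt)) = l.1 := by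
      apply List.ext_getElem
      · simp [l.2.1]
      · intro k h1 h2
        simp
    rw [h]
    exact l.2.2⟩
  left_inv x := by
    apply Subtype.ext
    funext i
    simp
  right_inv l := by
    apply Subtype.ext
    apply List.ext_getElem
    · simp [l.2.1]
    · intro k h1 h2
      simp

def flipB : Bool → DyckStep := fun b => bif b then DyckStep.D else DyckStep.U
def flipS : DyckStep → Bool := fun s => match s with | DyckStep.U => false | DyckStep.D => true

@[simp] lemma flipS_flipB (b : Bool) : flipS (flipB b) = b := by cases b <;> rfl
@[simp] lemma flipB_flipS (s : DyckStep) : flipB (flipS s) = s := by cases s <;> rfl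

lemma flipB_inj : Function.Injective flipB := by
  intro a b h
  cases a <;> cases b <;> first | rfl | (exfalso; simp [flipB] at h)

lemma flipS_inj : Function.Injective flipS := by
  intro a b h
  cases a <;> cases b <;> first | rfl | (exfalso; simp [flipS] at h)

lemma count_map_flipB_U (l : List Bool) :
    (l.map flipB).count DyckStep.U = l.count false := by
  simpa [flipB] using List.count_map_of_injective l flipB flipB_inj false

lemma count_map_flipB_D (l : List Bool) :
    (l.map flipB).count DyckStep.D = l.count true := by
  simpa [flipB] using List.count_map_of_injective l flipB flipB_inj true

lemma count_map_flipS_true (l : List DyckStep) :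
    (l.map flipS).count true = l.count DyckStep.D := by
  simpa [flipS] using List.count_map_of_injective l flipS flipS_inj DyckStep.D

lemma count_map_flipS_false (l : List DyckStep) :
    (l.map flipS).count false = l.count DyckStep.U := by
  simpa [flipS] using List.count_map_of_injective l flipS flipS_inj DyckStep.U

lemma bal_map_flipS (t : List DyckStep) :
    bal (t.map flipS) = (t.count DyckStep.D : ℤ) - t.count DyckStep.U := by
  simp [bal, count_map_flipS_true, count_map_flipS_false]

lemma hitL_struct {l : List Bool} (hl : 0 < l.length) (h : HitL l) :
    ∃ hne : l ≠ [], l.getLast hne = true ∧ bal l.dropLast = 1 ∧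
      (∀ k, bal (l.dropLast.take k) ≤ 1) := by
  have hne : l ≠ [] := by
    intro e
    rw [e] at hl
    simp at hl
  have hw : l.dropLast = l.take (l.length - 1) := List.dropLast_eq_take
  have hbw : bal l.dropLast ≤ 1 := by
    rw [hw]
    exact h.1 _ (by omega)
  have hb2 : bal l.dropLast + (if l.getLast hne then 1 else -1) = 2 := by
    rw [← bal_concat, List.dropLast_append_getLast hne]
    exact h.2
  have hlast : l.getLast hne = true := by
    cases hgl : l.getLast hne
    · rw [hgl] at hb2
      simp at hb2
      omega
    · rfl
  have hbw1 : bal l.dropLast = 1 := by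
    rw [hlast] at hb2
    simp at hb2
    omega
  refine ⟨hne, hlast, hbw1, fun k => ?_⟩
  rcases le_or_gt k (l.length - 1) with hk | hk
  · rw [hw, List.take_take, min_eq_left hk]
    exact h.1 k (by omega)
  · rw [List.take_of_length_le (by rw [List.length_dropLast]; omega), hbw1]

lemma hitL_counts {j : ℕ} {l : List Bool} (hl : l.length = 2 * (j + 1)) (h : HitL l) :
    l.dropLast.count true = j + 1 ∧ l.dropLast.count false = j := by
  obtain ⟨hne, hlast, hbw1, hpre⟩ := hitL_struct (by omega) h
  have hsum := count_true_add_count_false l.dropLast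
  rw [List.length_dropLast, hl] at hsum
  unfold bal at hbw1
  omega

open Classical in
/-- The key bijection: first-passage lists of length `2(j+1)` correspond to
Dyck words of semilength `j+1`. -/
noncomputable def hitDyckEquiv (j : ℕ) :
    {l : List Bool // l.length = 2 * (j + 1) ∧ HitL l} ≃
      {d : DyckWord // d.semilength = j + 1} where
  toFun L := ⟨⟨DyckStep.U :: (L.1.dropLast.map flipB),
    by
      obtain ⟨hlen, h⟩ := L.2
      obtain ⟨hct, hcf⟩ := hitL_counts hlen h
      rw [List.count_cons_self, List.count_cons_of_ne (by decide),
        count_map_flipB_U, count_map_flipB_D, hct, hcf],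
    by
      intro i
      obtain ⟨hlen, h⟩ := L.2
      obtain ⟨hne, hlast, hbw1, hpre⟩ := hitL_struct (by omega) h
      cases i with
      | zero => simp
      | succ k =>
        rw [List.take_succ_cons, ← List.map_take,
          List.count_cons_self, List.count_cons_of_ne (by decide),
          count_map_flipB_U, count_map_flipB_D]
        have hb := hpre k
        unfold bal at hb
        omega⟩,
    by
      obtain ⟨hlen, h⟩ := L.2
      obtain ⟨hct, hcf⟩ := hitL_counts hlen h
      show (DyckStep.U :: (L.1.dropLast.map flipB)).count DyckStep.U = j + 1
      rw [List.count_cons_self, count_map_flipB_U, hcf]⟩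
  invFun D := ⟨(D.1.toList.tail.map flipS) ++ [true],
    by
      have hlen : D.1.toList.length = 2 * (j + 1) := by
        rw [← D.1.two_mul_semilength_eq_length, D.2]
      have hne : D.1.toList ≠ [] := by
        intro e
        rw [e] at hlen
        simp at hlen
      have hsplit : DyckStep.U :: D.1.toList.tail = D.1.toList := by
        have h := List.cons_head_tail hne
        rw [DyckWord.head_eq_U D.1 hne] at h
        exact h
      have hU : D.1.toList.count DyckStep.U = j + 1 := by
        rw [← DyckWord.semilength, D.2]
      have hD : D.1.toList.count DyckStep.D = j + 1 := by
        rw [← DyckWord.semilength_eq_count_D, D.2]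
      have htailU : D.1.toList.tail.count DyckStep.U = j := by
        rw [← hsplit, List.count_cons_self] at hU
        omega
      have htailD : D.1.toList.tail.count DyckStep.D = j + 1 := by
        rw [← hsplit, List.count_cons_of_ne (by decide)] at hD
        omega
      have htlen : D.1.toList.tail.length = 2 * j + 1 := by
        rw [List.length_tail, hlen]
        omega
      constructor
      · simp [htlen]
        omega
      · constructor
        · intro k hk
          simp only [List.length_append, List.length_map, htlen, List.length_singleton] at hk
          rw [List.take_append_of_le_length (by simp [htlen]; omega), ← List.map_take]
          have hdyck := D.1.count_D_le_count_U (k + 1)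
          rw [← hsplit, List.take_succ_cons, List.count_cons_self,
            List.count_cons_of_ne (by decide)] at hdyck
          rw [bal_map_flipS]
          omega
        · rw [bal_concat, bal_map_flipS, htailU, htailD]
          simp⟩
  left_inv L := by
    apply Subtype.ext
    obtain ⟨hlen, h⟩ := L.2
    obtain ⟨hne, hlast, hbw1, hpre⟩ := hitL_struct (by omega) h
    show ((DyckStep.U :: (L.1.dropLast.map flipB)).tail.map flipS) ++ [true] = L.1
    rw [List.tail_cons, List.map_map]
    have hmap : (L.1.dropLast.map (flipS ∘ flipB)) = L.1.dropLast := by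
      rw [show flipS ∘ flipB = id from funext (fun b => flipS_flipB b), List.map_id]
    rw [hmap, ← hlast, List.dropLast_append_getLast hne]
  right_inv D := by
    apply Subtype.ext
    apply DyckWord.ext
    have hlen : D.1.toList.length = 2 * (j + 1) := by
      rw [← D.1.two_mul_semilength_eq_length, D.2]
    have hne : D.1.toList ≠ [] := by
      intro e
      rw [e] at hlen
      simp at hlen
    have hsplit : DyckStep.U :: D.1.toList.tail = D.1.toList := by
      have h := List.cons_head_tail hne
      rw [DyckWord.head_eq_U D.1 hne] at h
      exact h
    show DyckStep.U ::
        (((D.1.toList.tail.map flipS) ++ [true]).dropLast.map flipB) = D.1.toList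
    rw [List.dropLast_concat, List.map_map]
    have hmap : (D.1.toList.tail.map (flipB ∘ flipS)) = D.1.toList.tail := by
      rw [show flipB ∘ flipS = id from funext (fun s => flipB_flipS s), List.map_id]
    rw [hmap, hsplit]

open Classical in
theorem hit_card (j : ℕ) :
    Fintype.card {x : Fin (2 * (j + 1)) → Bool // x ∈ HitSet (2 * (j + 1))} =
      catalan (j + 1) := by
  rw [← DyckWord.card_dyckWord_semilength_eq_catalan (j + 1)]
  apply Fintype.card_congr
  exact ((Equiv.subtypeEquivRight (fun x => hitSet_iff_hitL _ x)).trans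
    (funListEquiv (2 * (j + 1)) HitL)).trans (hitDyckEquiv j)

lemma U_odd (p : ℝ) (n : ℕ) : U (2 * n + 1) p = U (2 * n) p := by
  have h := U_succ p (2 * n)
  rw [hitSet_odd (2 * n + 1) (by omega), walkProb_empty] at h
  simpa using h

lemma U_even_succ (p : ℝ) (n : ℕ) :
    U (2 * (n + 1)) p = U (2 * n + 1) p - (catalan (n + 1) : ℝ) * (p ^ (n + 2) * (1 - p) ^ n) := by
  have h := U_succ p (2 * n + 1)
  rw [show 2 * n + 1 + 1 = 2 * (n + 1) from by ring] at h
  rw [walkProb_hit p n, hit_card n] at h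
  exact h

lemma catalan_cast (j : ℕ) :
    (catalan (j + 1) : ℝ) = ((2 * (j + 1)).choose (j + 1) : ℝ) / ((j + 1 : ℕ) + 1) := by
  rw [catalan_eq_centralBinom_div,
    Nat.cast_div (Nat.succ_dvd_centralBinom (j + 1)) (by positivity),
    Nat.centralBinom_eq_two_mul_choose]
  push_cast
  ring

lemma U_zero (p : ℝ) : U 0 p = 1 := by
  rw [U, walkProb]
  simp [walkM, walkS, pathProb]

end WalkAux

/-- `U_{2n}(p) = U_{2n+1}(p) = 1 − Σ_{j=1}^{n} t_{j+1} p^{j+1} q^{j-1}`,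
where `t_{j+1} = C(2j, j)/(j+1)`. -/
theorem U_formula (p : ℝ) (hp : p ∈ Set.Ioo (0 : ℝ) 1) (n : ℕ) :
    U (2 * n) p = 1 - ∑ j ∈ Finset.Icc 1 n,
        (((2 * j).choose j : ℝ) / (j + 1)) * p ^ (j + 1) * (1 - p) ^ (j - 1) ∧
    U (2 * n + 1) p = 1 - ∑ j ∈ Finset.Icc 1 n,
        (((2 * j).choose j : ℝ) / (j + 1)) * p ^ (j + 1) * (1 - p) ^ (j - 1) := by
  induction n with
  | zero =>
    have h0 : U 0 p = 1 := WalkAux.U_zero p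
    have h1 : U 1 p = 1 := by
      have := WalkAux.U_odd p 0
      simpa [h0] using this
    simp [h0, h1]
  | succ n ih =>
    have hsum : ∑ j ∈ Finset.Icc 1 (n + 1),
        (((2 * j).choose j : ℝ) / (j + 1)) * p ^ (j + 1) * (1 - p) ^ (j - 1)
        = (∑ j ∈ Finset.Icc 1 n,
            (((2 * j).choose j : ℝ) / (j + 1)) * p ^ (j + 1) * (1 - p) ^ (j - 1))
          + (((2 * (n + 1)).choose (n + 1) : ℝ) / ((n + 1 : ℕ) + 1)) * p ^ (n + 2)
            * (1 - p) ^ n := by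
      rw [Finset.sum_Icc_succ_top (by omega)]
      norm_num
    have heven := WalkAux.U_even_succ p n
    have hcat := WalkAux.catalan_cast n
    constructor
    · rw [heven, WalkAux.U_odd p n, ih.1, hsum, hcat]
      push_cast
      ring
    · rw [WalkAux.U_odd p (n + 1), heven, WalkAux.U_odd p n, ih.1, hsum, hcat]
      push_cast
      ring
end
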